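/- Let α be a unit-speed C² plane curve on [0, L] that is closed and periodic in the sense that α(0) = α(L) and α'(0) = α'(L). Then the total curvature K = ∫₀^L κ(s) ds equals 2π·ω for some integer ω (the rotation index). -/

import Mathlib

open Real

theorem stmt6 (α : ℝ → EuclideanSpace ℝ (Fin 2)) (κ : ℝ → ℝ) (L : ℝ)
    (hα : ContDiff ℝ 2 α)
    (hL : 0 ≤ L)
    (hunit : ∀ s, ‖deriv α s‖ = 1)
    (hclosed : α 0 = α L)
    (hclosed' : deriv α 0 = deriv α L)
    (hκ : ∀ s, κ s = deriv α s 0 * deriv (deriv α) s 1 - deriv α s 1 * deriv (deriv α) s 0) :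
    ∃ ω : ℤ, ∫ s in (0:ℝ)..L, κ s = 2 * π * ω := by
  -- T = tangent, x y components
  set T : ℝ → EuclideanSpace ℝ (Fin 2) := deriv α with hTdef
  have hα2 : ContDiff ℝ ((1 : WithTop ℕ∞) + 1) α := by
    exact hα.of_le (by norm_num)
  have hT : ContDiff ℝ 1 T := (contDiff_succ_iff_deriv.mp hα2).2.2
  have hTdiff : Differentiable ℝ T := (contDiff_one_iff_deriv.mp hT).1
  have hT'cont : Continuous (deriv T) := (contDiff_one_iff_deriv.mp hT).2
  set x : ℝ → ℝ := fun s => T s 0 with hxdef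
  set y : ℝ → ℝ := fun s => T s 1 with hydef
  have hx : ∀ s, HasDerivAt x (deriv T s 0) s := by
    intro s
    have := (EuclideanSpace.proj (0 : Fin 2)).hasFDerivAt.comp_hasDerivAt s
      (hTdiff s).hasDerivAt
    exact this
  have hy : ∀ s, HasDerivAt y (deriv T s 1) s := by
    intro s
    have := (EuclideanSpace.proj (1 : Fin 2)).hasFDerivAt.comp_hasDerivAt s
      (hTdiff s).hasDerivAt
    exact this
  -- unit speed : x^2 + y^2 = 1
  have hsq : ∀ s, x s * x s + y s * y s = 1 := by
    intro s
    have h := hunit s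
    rw [EuclideanSpace.norm_eq] at h
    have : Real.sqrt (∑ i : Fin 2, ‖T s i‖ ^ 2) = 1 := h
    rw [Fin.sum_univ_two] at this
    have h2 : ‖T s 0‖ ^ 2 + ‖T s 1‖ ^ 2 = 1 := Real.sqrt_eq_one.mp this
    simpa [hxdef, hydef, Real.norm_eq_abs, sq_abs, sq, abs_mul_abs_self] using h2
  -- orthogonality : x x' + y y' = 0
  have horth : ∀ s, x s * deriv T s 0 + y s * deriv T s 1 = 0 := by
    intro s
    have hd : HasDerivAt (fun s => x s * x s + y s * y s)
        (deriv T s 0 * x s + x s * deriv T s 0 + (deriv T s 1 * y s + y s * deriv T s 1)) s :=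
      ((hx s).mul (hx s)).add ((hy s).mul (hy s))
    have hconst : (fun s => x s * x s + y s * y s) = fun _ => (1:ℝ) := funext hsq
    rw [hconst] at hd
    have := hd.unique (hasDerivAt_const s 1)
    linarith
  -- complex tangent t and its derivative
  set t : ℝ → ℂ := fun s => (x s : ℂ) + (y s : ℂ) * Complex.I with htdef
  have ht : ∀ s, HasDerivAt t (((deriv T s 0 : ℂ)) + (deriv T s 1 : ℂ) * Complex.I) s := by
    intro s
    exact ((hx s).ofReal_comp).add (((hy s).ofReal_comp).mul_const Complex.I)
  -- key ODE : t' = κ I t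
  have hode : ∀ s, HasDerivAt t ((κ s : ℂ) * Complex.I * t s) s := by
    intro s
    have h := ht s
    have hk : κ s = x s * deriv T s 1 - y s * deriv T s 0 := hκ s
    have ho := horth s
    have hs := hsq s
    convert h using 1
    rw [htdef]
    simp only [hk]
    push_cast
    have hoC : (x s : ℂ) * (deriv T s 0 : ℂ) + (y s : ℂ) * (deriv T s 1 : ℂ) = 0 := by
      exact_mod_cast congrArg (Complex.ofReal) ho
    have hsC : (x s : ℂ) * (x s : ℂ) + (y s : ℂ) * (y s : ℂ) = 1 := by
      exact_mod_cast congrArg (Complex.ofReal) hs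
    set a := (x s : ℂ); set b := (y s : ℂ); set c := (deriv T s 0 : ℂ); set d := (deriv T s 1 : ℂ)
    have : (a * d - b * c) * Complex.I * (a + b * Complex.I)
        = (a * a + b * b) * (c + d * Complex.I) - (a * c + b * d) * (Complex.I * b + a) := by
      ring_nf
      simp [Complex.I_sq]
    rw [this, hoC, hsC]
    ring
  -- κ is continuous
  have hκcont : Continuous κ := by
    have hxc : Continuous x := ((EuclideanSpace.proj (0 : Fin 2)).continuous).comp hT.continuous
    have hyc : Continuous y := ((EuclideanSpace.proj (1 : Fin 2)).continuous).comp hT.continuous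
    have hx'c : Continuous (fun s => deriv T s 0) :=
      ((EuclideanSpace.proj (0 : Fin 2)).continuous).comp hT'cont
    have hy'c : Continuous (fun s => deriv T s 1) :=
      ((EuclideanSpace.proj (1 : Fin 2)).continuous).comp hT'cont
    have : κ = fun s => x s * deriv T s 1 - y s * deriv T s 0 := funext fun s => hκ s
    rw [this]
    exact ((hxc.mul hy'c).sub (hyc.mul hx'c))
  -- antiderivative of κ
  set F : ℝ → ℝ := fun u => ∫ v in (0:ℝ)..u, κ v with hFdef
  have hF : ∀ s, HasDerivAt F (κ s) s := fun s =>
    (hκcont.integral_hasStrictDerivAt 0 s).hasDerivAt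
  -- g = t * exp(-F i) is constant
  set g : ℝ → ℂ := fun s => t s * Complex.exp (-(F s : ℂ) * Complex.I) with hgdef
  have hg : ∀ s, HasDerivAt g 0 s := by
    intro s
    have hFc : HasDerivAt (fun u => -(F u : ℂ) * Complex.I) (-(κ s : ℂ) * Complex.I) s := by
      exact (((hF s).ofReal_comp).neg).mul_const Complex.I
    have hec := hFc.cexp
    have : HasDerivAt g _ s := (hode s).mul hec
    convert this using 1
    ring
  have hgdiff : Differentiable ℝ g := fun s => (hg s).differentiableAt
  have hg0L : g 0 = g L :=
    is_const_of_deriv_eq_zero hgdiff (fun s => (hg s).deriv) 0 L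
  have hF0 : F 0 = 0 := intervalIntegral.integral_same
  have htL : t L = t 0 := by
    simp only [htdef, hxdef, hydef, ← hclosed']
  have ht0ne : t 0 ≠ 0 := by
    intro h
    have hre := congrArg Complex.re h
    have him := congrArg Complex.im h
    simp [htdef] at hre him
    have := hsq 0
    rw [hre, him] at this
    norm_num at this
  have hexp1 : Complex.exp (-(F L : ℂ) * Complex.I) = 1 := by
    have h := hg0L
    rw [hgdef] at h
    simp only [hF0] at h
    rw [htL] at h
    simp only [Complex.ofReal_zero, neg_zero, zero_mul, Complex.exp_zero, mul_one] at h
    exact (mul_left_cancel₀ ht0ne ((mul_one (t 0)).trans h)).symm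
  rw [Complex.exp_eq_one_iff] at hexp1
  obtain ⟨n, hn⟩ := hexp1
  refine ⟨-n, ?_⟩
  have him := congrArg Complex.im hn
  simp [Complex.mul_im] at him
  show F L = 2 * π * (-n : ℤ)
  push_cast
  linarith
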